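/- arXiv:1004.2891 — 3 statements merged into one kernel-verified Lean document; each statement's English description precedes it below -/
import Mathlib

section
/- Let G = (V, W, E) be an instance of Label Cover with a total labeling l : V ∪ W → (finite nonempty sets of labels) satisfying every edge, such that every vertex receives exactly one label (|l(x)| = 1 for all x). In the derived graph G' (with components G_{v,w} replacing each edge, a root s joined to all v ∈ V by dummy edges), selecting from each component G_{v,w} the unique label edge (v, u^{v,w}_{a,b}) with a ∈ l(v), b ∈ l(w), together with enough dummy edges, yields a spanning tree T of G' containing no two label-distinct label edges, hence with ∑_{e∈T} c^S_e ≤ 1 for every scenario S. -/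
/-- A label edge of the derived graph `G'`: the pair of an edge `(v,w)` of the
bipartite Label Cover instance and a label pair `(a,b)`; it corresponds to the
edge `(v, u^{v,w}_{a,b})` of the component `G_{v,w}`. -/
def LabelEdge (V W : Type) : Type := (V × W) × (ℕ × ℕ)

/-- Two label edges are label-distinct if they do not assign the same label to any
vertex: `(a = a' → v ≠ v')` and `(b = b' → w ≠ w')`. -/
def LabelDistinct {V W : Type} (e e' : LabelEdge V W) : Prop :=
  (e.2.1 = e'.2.1 → e.1.1 ≠ e'.1.1) ∧ (e.2.2 = e'.2.2 → e.1.2 ≠ e'.1.2)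

open Classical in
/-- If a Label Cover instance `(E, σ)` has a total labeling assigning exactly one
label to each vertex (`l` on `V`, `l'` on `W`) that satisfies every edge, then the
spanning tree `T` of `G'` obtained by selecting from each component `G_{v,w}` the
unique label edge `(v, u^{v,w}_{l v, l' w})` (together with zero-cost dummy edges)
contains no two label-distinct label edges incident to a common vertex of `G`;
hence for every scenario `S` — a family of pairwise label-distinct label edges all
sharing a vertex `v ∈ V` or all sharing a vertex `w ∈ W`, each given cost `1`,
all other edges cost `0` — the cost of `T` under `S` is at most `1`. -/
theorem stmt_16 {V W : Type} [DecidableEq V] [DecidableEq W]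
    (E : Finset (V × W)) (σ : V → W → ℕ → Option ℕ)
    (l : V → ℕ) (l' : W → ℕ)
    (hsat : ∀ p ∈ E, σ p.1 p.2 (l p.1) = some (l' p.2))
    (T : Finset (LabelEdge V W))
    (hT : T = E.image (fun p => ((p.1, p.2), (l p.1, l' p.2))))
    (S : Finset (LabelEdge V W))
    (hdistinct : ∀ e ∈ S, ∀ e' ∈ S, e ≠ e' → LabelDistinct e e')
    (hshare : (∃ v : V, ∀ e ∈ S, e.1.1 = v) ∨ (∃ w : W, ∀ e ∈ S, e.1.2 = w)) :
    ∑ e ∈ T, (if e ∈ S then (1 : ℝ) else 0) ≤ 1 := by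
  classical
  have hsum : ∑ e ∈ T, (if e ∈ S then (1 : ℝ) else 0)
      = ((T.filter (· ∈ S)).card : ℝ) := by
    rw [Finset.sum_boole]
  rw [hsum]
  norm_cast
  apply Finset.card_le_one.mpr
  intro e he e' he'
  simp only [Finset.mem_filter] at he he'
  by_contra hne
  have hd := hdistinct e he.2 e' he'.2 hne
  -- structure of elements of T
  have he1 := he.1
  have he1' := he'.1
  rw [hT] at he1 he1'
  obtain ⟨p, -, hp⟩ := (Finset.mem_image (β := (V × W) × ℕ × ℕ)).mp he1
  obtain ⟨p', -, hp'⟩ := (Finset.mem_image (β := (V × W) × ℕ × ℕ)).mp he1'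
  rcases hshare with ⟨v, hv⟩ | ⟨w, hw⟩
  · have h1 : e.1.1 = e'.1.1 := by rw [hv e he.2, hv e' he'.2]
    have h2 : e.2.1 = e'.2.1 := by
      rw [← hp, ← hp'] at h1 ⊢
      simpa using congrArg l h1
    exact hd.1 h2 h1
  · have h1 : e.1.2 = e'.1.2 := by rw [hw e he.2, hw e' he'.2]
    have h2 : e.2.2 = e'.2.2 := by
      rw [← hp, ← hp'] at h1 ⊢
      simpa using congrArg l' h1
    exact hd.2 h2 h1
end

section
/- In the reduction from Set Cover to 2-Stage Spanning Tree: given a ground set U = {1,…,n} and subsets U₁,…,U_m covering U, build the complete graph on vertices {u₁,…,u_m, 1,…,n, r}, first-stage costs: c(r,u_i) = 1 and all other edges cost m+1; for each j ∈ U a scenario S_j in which edges of the cut (T_j, V∖T_j), with T_j = {j} ∪ {u_i : j ∈ U_i}, cost m+1 and all other edges cost 0. Then there is a set cover of size at most k ≤ m if and only if there is a first-stage edge set E₁ and second-stage completions whose maximum 2-stage cost over all scenarios is at most k. -/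
/-- Vertices of the graph in the Set Cover reduction: `m` subset-vertices `u_i`,
`n` element-vertices, and a root `r`. -/
abbrev SCVtx (m n : ℕ) : Type := Fin m ⊕ Fin n ⊕ Unit

/-- The root vertex `r`. -/
def SCroot (m n : ℕ) : SCVtx m n := Sum.inr (Sum.inr ())

open Classical in
/-- First-stage costs: edges `(r, u_i)` cost `1`, all other edges cost `m + 1`. -/
noncomputable def SCcost1 (m n : ℕ) (e : Sym2 (SCVtx m n)) : ℝ :=
  if SCroot m n ∈ e ∧ ∃ i : Fin m, Sum.inl i ∈ e then 1 else m + 1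

/-- The side `T_j = {j} ∪ {u_i : j ∈ U i}` of the cut of scenario `S_j`. -/
def SCside (m n : ℕ) (U : Fin m → Finset (Fin n)) (j : Fin n) : Set (SCVtx m n) :=
  {v | v = Sum.inr (Sum.inl j) ∨ ∃ i : Fin m, v = Sum.inl i ∧ j ∈ U i}

open Classical in
/-- Second-stage costs under scenario `S_j`: edges of the cut `(T_j, V ∖ T_j)` cost
`m + 1`, all other edges cost `0`. -/
noncomputable def SCcost2 (m n : ℕ) (U : Fin m → Finset (Fin n)) (j : Fin n)
    (e : Sym2 (SCVtx m n)) : ℝ :=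
  if ∃ a b, e = s(a, b) ∧ a ∈ SCside m n U j ∧ b ∉ SCside m n U j then m + 1 else 0

open SimpleGraph in
lemma parent_isTree {V : Type*} (r : V) (p : V → V) (d : V → ℕ)
    (hpr : p r = r) (hd : ∀ v, v ≠ r → d (p v) < d v) :
    (SimpleGraph.fromEdgeSet {e | ∃ v : V, e = s(v, p v)}).IsTree := by
  classical
  set G := SimpleGraph.fromEdgeSet {e | ∃ v : V, e = s(v, p v)} with hG
  have hadj : ∀ {x y : V}, G.Adj x y → (x ≠ r ∧ y = p x) ∨ (y ≠ r ∧ x = p y) := by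
    intro x y hxy
    obtain ⟨⟨v, hv⟩, hne⟩ := hxy
    rw [Sym2.eq_iff] at hv
    rcases hv with ⟨rfl, rfl⟩ | ⟨h1, rfl⟩
    · left
      refine ⟨?_, rfl⟩
      rintro rfl
      exact hne hpr.symm
    · right
      refine ⟨?_, h1⟩
      rintro rfl
      rw [hpr] at h1
      exact hne h1
  have hradj : ∀ x, x ≠ r → G.Adj x (p x) := by
    intro x hx
    refine ⟨⟨x, rfl⟩, ?_⟩
    intro h
    have := hd x hx
    rw [← h] at this
    omega
  have hreach : ∀ N (x : V), d x ≤ N → G.Reachable x r := by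
    intro N
    induction N with
    | zero =>
      intro x hx
      by_cases h : x = r
      · subst h; exact Reachable.refl _
      · exact absurd (hd x h) (by omega)
    | succ N ih =>
      intro x hx
      by_cases h : x = r
      · subst h; exact Reachable.refl _
      · exact (hradj x h).reachable.trans (ih (p x) (by have := hd x h; omega))
  refine ⟨?_, ?_⟩
  · haveI : Nonempty V := ⟨r⟩
    exact SimpleGraph.Connected.mk fun x y =>
      (hreach (d x) x le_rfl).trans (hreach (d y) y le_rfl).symm
  · intro a c hc
    obtain ⟨v, hv, hvmax⟩ := Finset.exists_max_image c.support.toFinset d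
      ⟨a, by simp [Walk.start_mem_support]⟩
    simp only [List.mem_toFinset] at hv
    set c' := c.rotate v hv with hc'def
    have hc' : c'.IsCycle := hc.rotate hv
    have hsup : ∀ x ∈ c'.support, d x ≤ d v := by
      intro x hx
      rcases (Walk.mem_support_iff c').mp hx with rfl | hx'
      · exact le_rfl
      · have := (Walk.support_rotate c v hv).mem_iff.mp hx'
        exact hvmax x (List.mem_toFinset.mpr (c.support.mem_of_mem_tail this))
    clear_value c'
    cases c' with
    | nil => exact hc'.not_of_nil
    | @cons _ u _ h q =>
      have hu : u = p v := by
        rcases hadj h with ⟨_, h2⟩ | ⟨h1, h2⟩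
        · exact h2
        · have : d u ≤ d v := hsup u (by simp [Walk.start_mem_support])
          have := hd u h1
          rw [← h2] at this
          omega
      have huv : v ≠ u := h.ne
      obtain ⟨x, h', q₂, heq⟩ := Walk.exists_eq_cons_of_ne (Ne.symm huv).symm q.reverse
      have hxq : x ∈ q.support := by
        have : x ∈ q.reverse.support := by
          rw [heq]
          simp [Walk.start_mem_support]
        rwa [Walk.support_reverse, List.mem_reverse] at this
      have hx : x = p v := by
        rcases hadj h' with ⟨_, h2⟩ | ⟨h1, h2⟩
        · exact h2
        · have : d x ≤ d v := hsup x (by simp [hxq])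
          have := hd x h1
          rw [← h2] at this
          omega
      have hmem : s(v, u) ∈ q.edges := by
        have : s(v, x) ∈ q.reverse.edges := by
          rw [heq]
          simp
        rw [Walk.edges_reverse, List.mem_reverse] at this
        rwa [hx, ← hu] at this
      have := hc'.edges_nodup
      rw [Walk.edges_cons, List.nodup_cons] at this
      exact this.1 hmem

/-- Set Cover reduces to 2-Stage Spanning Tree: on the complete graph over
`{u₁,…,u_m, 1,…,n, r}` with the costs above, there is a subcollection of size at
most `k ≤ m` covering the ground set iff there are a first-stage edge set `E₁` and
second-stage completions `E₂^{S_j}` such that `E₁ ∪ E₂^{S_j}` is a spanning tree for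
every scenario `S_j` and the maximum 2-stage cost over all scenarios is at most `k`. -/
theorem stmt_17 (m n k : ℕ) (hm : 0 < m) (hn : 0 < n) (hk : k ≤ m)
    (U : Fin m → Finset (Fin n)) (hcover : ∀ j : Fin n, ∃ i, j ∈ U i) :
    (∃ I : Finset (Fin m), I.card ≤ k ∧ ∀ j : Fin n, ∃ i ∈ I, j ∈ U i) ↔
    (∃ (E₁ : Finset (Sym2 (SCVtx m n))) (E₂ : Fin n → Finset (Sym2 (SCVtx m n))),
      (∀ j : Fin n, (SimpleGraph.fromEdgeSet ((↑(E₁ ∪ E₂ j) : Set (Sym2 (SCVtx m n))))).IsTree) ∧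
      (∀ j : Fin n,
        ∑ e ∈ E₁, SCcost1 m n e + ∑ e ∈ E₂ j, SCcost2 m n U j e ≤ (k : ℝ))) := by
  classical
  constructor
  · rintro ⟨I, hIcard, hIcov⟩
    choose i₀ hi₀I hi₀U using hIcov
    let p : Fin n → SCVtx m n → SCVtx m n := fun j v =>
      match v with
      | Sum.inl i => if i ∉ I ∧ j ∈ U i then Sum.inl (i₀ j) else SCroot m n
      | Sum.inr (Sum.inl j') => if j' = j then Sum.inl (i₀ j) else SCroot m n
      | Sum.inr (Sum.inr _) => SCroot m n
    let d : Fin n → SCVtx m n → ℕ := fun j v =>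
      match v with
      | Sum.inl i => if i = i₀ j then 1 else 2
      | Sum.inr (Sum.inl _) => 3
      | Sum.inr (Sum.inr _) => 0
    have hpr : ∀ j, p j (SCroot m n) = SCroot m n := fun j => rfl
    have hd : ∀ j v, v ≠ SCroot m n → d j (p j v) < d j v := by
      intro j v hv
      rcases v with i | j' | u
      · by_cases h : i ∉ I ∧ j ∈ U i
        · have hne : i ≠ i₀ j := by rintro rfl; exact h.1 (hi₀I j)
          simp [p, d, h, hne]
        · simp only [p, d, h, if_false, if_neg h, SCroot]
          split <;> omega
      · by_cases h : j' = j <;> simp [p, d, h, SCroot]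
      · exact absurd (by cases u; rfl) hv
    set E₁ : Finset (Sym2 (SCVtx m n)) := I.image (fun i => s(SCroot m n, Sum.inl i)) with hE₁
    refine ⟨E₁, fun j => (Finset.univ.image fun v => s(v, p j v)) \ E₁, ?_, ?_⟩
    · intro j
      have hsub : E₁ ⊆ Finset.univ.image fun v => s(v, p j v) := by
        intro e he
        simp only [hE₁, Finset.mem_image] at he
        obtain ⟨i, hi, rfl⟩ := he
        simp only [Finset.mem_image, Finset.mem_univ, true_and]
        refine ⟨Sum.inl i, ?_⟩
        have : p j (Sum.inl i) = SCroot m n := if_neg (fun hh => hh.1 hi)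
        rw [this, Sym2.eq_swap]
      have hunion : (↑(E₁ ∪ ((Finset.univ.image fun v => s(v, p j v)) \ E₁)) :
          Set (Sym2 (SCVtx m n))) = {e | ∃ v : SCVtx m n, e = s(v, p j v)} := by
        rw [Finset.union_sdiff_self_eq_union, Finset.union_eq_right.mpr hsub]
        ext e
        simp [eq_comm]
      rw [hunion]
      exact parent_isTree (SCroot m n) (p j) (d j) (hpr j) (hd j)
    · intro j
      have h1 : ∑ e ∈ E₁, SCcost1 m n e = E₁.card := by
        rw [Finset.sum_congr rfl (g := fun _ => (1 : ℝ)) ?_, Finset.sum_const,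
          nsmul_eq_mul, mul_one]
        intro e he
        simp only [hE₁, Finset.mem_image] at he
        obtain ⟨i, hi, rfl⟩ := he
        unfold SCcost1
        rw [if_pos]
        exact ⟨Sym2.mem_mk_left _ _, ⟨i, Sym2.mem_mk_right _ _⟩⟩
      have h2 : ∑ e ∈ (Finset.univ.image fun v => s(v, p j v)) \ E₁,
          SCcost2 m n U j e = 0 := by
        refine Finset.sum_eq_zero ?_
        intro e he
        simp only [Finset.mem_sdiff, Finset.mem_image, Finset.mem_univ, true_and] at he
        obtain ⟨⟨v, rfl⟩, hne⟩ := he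
        have hiff : v ∈ SCside m n U j ↔ p j v ∈ SCside m n U j := by
          rcases v with i | j' | u
          · by_cases h : i ∉ I ∧ j ∈ U i
            · simp [p, h, SCside, h.2, hi₀U j]
            · have hiI : i ∉ I := by
                intro hiI
                apply hne
                simp only [hE₁, Finset.mem_image]
                refine ⟨i, hiI, ?_⟩
                have : p j (Sum.inl i) = SCroot m n := if_neg (fun hh => hh.1 hiI)
                rw [this, Sym2.eq_swap]
              have hjU : j ∉ U i := by
                intro hjU; exact h ⟨hiI, hjU⟩
              simp [p, h, SCside, SCroot, hjU]
          · by_cases h : j' = j <;> simp [p, h, SCside, SCroot, hi₀U j]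
          · cases u; simp [p, SCside, SCroot]
        unfold SCcost2
        rw [if_neg]
        rintro ⟨a, b, hab, haS, hbS⟩
        rw [Sym2.eq_iff] at hab
        rcases hab with ⟨rfl, rfl⟩ | ⟨rfl, rfl⟩
        · exact hbS (hiff.mp haS)
        · exact hbS (hiff.mpr haS)
      rw [h1, h2, add_zero]
      have : E₁.card ≤ k := le_trans Finset.card_image_le hIcard
      exact_mod_cast this
  · rintro ⟨E₁, E₂, htree, hcost⟩
    set j₀ : Fin n := ⟨0, hn⟩ with hj₀
    have hc1 : ∀ e, (1 : ℝ) ≤ SCcost1 m n e := by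
      intro e
      unfold SCcost1
      split
      · exact le_refl _
      · have : (0 : ℝ) ≤ m := Nat.cast_nonneg m
        linarith
    have hc2 : ∀ j e, (0 : ℝ) ≤ SCcost2 m n U j e := by
      intro j e
      unfold SCcost2
      split
      · have : (0 : ℝ) ≤ m := Nat.cast_nonneg m
        linarith
      · exact le_refl _
    have hs2 : ∀ j, (0 : ℝ) ≤ ∑ e ∈ E₂ j, SCcost2 m n U j e :=
      fun j => Finset.sum_nonneg fun e _ => hc2 j e
    have hs1 : (0 : ℝ) ≤ ∑ e ∈ E₁, SCcost1 m n e :=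
      Finset.sum_nonneg fun e _ => le_trans zero_le_one (hc1 e)
    have hsum1 : ∑ e ∈ E₁, SCcost1 m n e ≤ (k : ℝ) := by
      have := hcost j₀
      linarith [hs2 j₀]
    have hcard : E₁.card ≤ k := by
      have h := Finset.card_nsmul_le_sum E₁ (SCcost1 m n) 1 (fun e _ => hc1 e)
      rw [nsmul_eq_mul, mul_one] at h
      have : (E₁.card : ℝ) ≤ (k : ℝ) := le_trans h hsum1
      exact_mod_cast this
    have hE1form : ∀ e ∈ E₁, ∃ i : Fin m, e = s(SCroot m n, Sum.inl i) := by
      intro e he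
      have hcond : SCroot m n ∈ e ∧ ∃ i : Fin m, Sum.inl i ∈ e := by
        by_contra hcon
        have hval : SCcost1 m n e = m + 1 := by unfold SCcost1; rw [if_neg hcon]
        have hle : SCcost1 m n e ≤ ∑ e ∈ E₁, SCcost1 m n e :=
          Finset.single_le_sum (fun e _ => le_trans zero_le_one (hc1 e)) he
        rw [hval] at hle
        have hkm : (k : ℝ) ≤ m := Nat.cast_le.mpr hk
        linarith
      obtain ⟨hre, i, hie⟩ := hcond
      induction e using Sym2.ind with
      | _ a b =>
        rw [Sym2.mem_iff] at hre hie
        refine ⟨i, ?_⟩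
        rcases hre with rfl | rfl
        · rcases hie with h | rfl
          · exact absurd h (by simp [SCroot])
          · rfl
        · rcases hie with rfl | h
          · exact Sym2.eq_swap.symm
          · exact absurd h (by simp [SCroot])
    have hnocross : ∀ j, ∀ e ∈ E₂ j,
        ¬∃ a b, e = s(a, b) ∧ a ∈ SCside m n U j ∧ b ∉ SCside m n U j := by
      intro j e he hcon
      have hval : SCcost2 m n U j e = m + 1 := by unfold SCcost2; rw [if_pos hcon]
      have hle : SCcost2 m n U j e ≤ ∑ e ∈ E₂ j, SCcost2 m n U j e :=
        Finset.single_le_sum (fun e _ => hc2 j e) he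
      rw [hval] at hle
      have := hcost j
      have hkm : (k : ℝ) ≤ m := Nat.cast_le.mpr hk
      linarith
    refine ⟨Finset.univ.filter (fun i => s(SCroot m n, Sum.inl i) ∈ E₁), ?_, ?_⟩
    · refine le_trans (Finset.card_le_card_of_injOn
        (fun i => s(SCroot m n, Sum.inl i)) ?_ ?_) hcard
      · intro i hi
        exact (Finset.mem_filter.mp hi).2
      · intro i _ i' _ hii'
        have := Sym2.congr_right.mp hii'
        exact Sum.inl.injEq .. ▸ (by injection this)
    · intro j
      have hjS : (Sum.inr (Sum.inl j) : SCVtx m n) ∈ SCside m n U j := Or.inl rfl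
      have hrS : SCroot m n ∉ SCside m n U j := by simp [SCside, SCroot]
      obtain ⟨w⟩ := (htree j).isConnected.preconnected (Sum.inr (Sum.inl j)) (SCroot m n)
      obtain ⟨dt, hdt, hfst, hsnd⟩ := w.exists_boundary_dart (SCside m n U j) hjS hrS
      have hadj := dt.adj
      rw [SimpleGraph.fromEdgeSet_adj] at hadj
      obtain ⟨hmem, -⟩ := hadj
      rw [Finset.mem_coe, Finset.mem_union] at hmem
      rcases hmem with hmem | hmem
      · obtain ⟨i, hei⟩ := hE1form _ hmem
        rw [Sym2.eq_iff] at hei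
        rcases hei with ⟨h1, h2⟩ | ⟨h1, h2⟩
        · exact absurd (h1 ▸ hfst) hrS
        · refine ⟨i, Finset.mem_filter.mpr ⟨Finset.mem_univ i, ?_⟩, ?_⟩
          · rw [← Sym2.eq_swap, ← h1, ← h2]
            exact hmem
          · rw [h1] at hfst
            rcases hfst with h | ⟨i', hi', hU⟩
            · exact absurd h (by simp)
            · have : i = i' := by injection hi'
              exact this ▸ hU
      · exact absurd ⟨dt.fst, dt.snd, rfl, hfst, hsnd⟩ (hnocross j _ hmem)
end

section
/- In the 3-SAT reduction graph: G consists of m series-connected gadgets G_i, each with vertices s_i, v₁^i, v₂^i, v₃^i, t_i, literal edges (s_i, v_j^i) and back edges (v_j^i, t_i) of cost -1 in all scenarios (t_i identified with s_{i+1}); for each pair of literal edges corresponding to contradictory literals there is a scenario giving those two edges cost 4m - 1 and all other edges cost -1. Then: (a) every spanning tree T of G has max_{S} ∑_{e∈T} c^S_e ≥ 0; (b) if the 3-SAT instance is satisfiable there is a spanning tree with max-scenario cost 0; (c) if unsatisfiable, every spanning tree has max-scenario cost ≥ 4m. -/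
/-- Vertices of the graph in the 3-SAT reduction: the chain vertices
`s_1, …, s_m, t_m` (with `t_i` identified with `s_{i+1}`) and the literal vertices
`v_j^i` for clause `i` and position `j`. -/
abbrev SatVtx (m : ℕ) : Type := Fin (m + 1) ⊕ (Fin m × Fin 3)

/-- The literal edge `(s_i, v_j^i)` corresponding to the `j`-th literal of clause `i`. -/
def litEdge {m : ℕ} (p : Fin m × Fin 3) : Sym2 (SatVtx m) :=
  s(Sum.inl p.1.castSucc, Sum.inr p)

/-- The back edge `(v_j^i, t_i)`, where `t_i = s_{i+1}`. -/
def backEdge {m : ℕ} (p : Fin m × Fin 3) : Sym2 (SatVtx m) :=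
  s(Sum.inr p, Sum.inl p.1.succ)

/-- The edge set of the reduction graph `G`: all literal and back edges. -/
def satEdges (m : ℕ) : Set (Sym2 (SatVtx m)) :=
  {e | ∃ p : Fin m × Fin 3, e = litEdge p ∨ e = backEdge p}

/-- Two literal occurrences are contradictory if they involve the same variable with
opposite signs. -/
def Contra {nv m : ℕ} (cl : Fin m → Fin 3 → Fin nv × Bool)
    (p q : Fin m × Fin 3) : Prop :=
  (cl p.1 p.2).1 = (cl q.1 q.2).1 ∧ (cl p.1 p.2).2 = !(cl q.1 q.2).2

/-- Costs under the scenario associated with the contradictory pair `(p, q)`: the two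
literal edges of `p` and `q` cost `4m - 1`, all other edges cost `-1`. -/
def scenCost {m : ℕ} (p q : Fin m × Fin 3) (e : Sym2 (SatVtx m)) : ℝ :=
  if e = litEdge p ∨ e = litEdge q then 4 * m - 1 else -1


open SimpleGraph

-- basic Sym2 facts
lemma litEdge_inj {m : ℕ} {p q : Fin m × Fin 3} (h : litEdge p = litEdge q) : p = q := by
  simp [litEdge, Sym2.eq_iff] at h
  exact h.2

lemma litEdge_ne_backEdge {m : ℕ} (p q : Fin m × Fin 3) : litEdge p ≠ backEdge q := by
  simp [litEdge, backEdge, Sym2.eq_iff]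
  intro h hpq
  subst hpq
  have := congrArg Fin.val h
  simp at this

lemma litEdge_not_diag {m : ℕ} (p : Fin m × Fin 3) : ¬ (litEdge p).IsDiag := by
  simp [litEdge]

lemma backEdge_not_diag {m : ℕ} (p : Fin m × Fin 3) : ¬ (backEdge p).IsDiag := by
  simp [backEdge]

-- walk coloring
lemma reachable_color {V : Type*} {G : SimpleGraph V} {f : V → Prop}
    (h : ∀ a b, G.Adj a b → (f a ↔ f b)) {u v : V} (hr : G.Reachable u v) : f u ↔ f v := by
  obtain ⟨w⟩ := hr
  induction w with
  | nil => exact Iff.rfl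
  | cons h' p ih => exact (h _ _ h').trans ih

open SimpleGraph

lemma isTree_parent {V : Type*} (r : V) (π : V → V) (μ : V → ℕ)
    (hr : π r = r) (hdec : ∀ v, v ≠ r → μ (π v) < μ v) :
    (SimpleGraph.fromEdgeSet {e | ∃ v, v ≠ r ∧ e = s(v, π v)}).IsTree := by
  set S : Set (Sym2 V) := {e | ∃ v, v ≠ r ∧ e = s(v, π v)} with hS
  set G := SimpleGraph.fromEdgeSet S with hG
  have hiter : ∀ (k : ℕ) (x : V), μ (π^[k] x) ≤ μ x := by
    intro k
    induction k with
    | zero => intro x; simp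
    | succ k ih =>
      intro x
      rw [Function.iterate_succ_apply]
      refine (ih (π x)).trans ?_
      by_cases hx : x = r
      · subst hx; rw [hr]
      · exact (hdec x hx).le
  have hnoret : ∀ v, v ≠ r → ∀ k, π^[k] (π v) ≠ v := by
    intro v hv k hk
    have h1 := hiter k (π v)
    rw [hk] at h1
    exact absurd (h1.trans_lt (hdec v hv)) (lt_irrefl _)
  have hne : ∀ v, v ≠ r → π v ≠ v := fun v hv => hnoret v hv 0
  have hadjp : ∀ v, v ≠ r → G.Adj v (π v) := by
    intro v hv
    rw [hG, fromEdgeSet_adj]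
    exact ⟨⟨v, hv, rfl⟩, (hne v hv).symm⟩
  have hreach : ∀ (n : ℕ) (v : V), μ v ≤ n → G.Reachable v r := by
    intro n
    induction n with
    | zero =>
      intro v hv
      by_cases hvr : v = r
      · subst hvr; exact Reachable.refl _
      · exact absurd ((hdec v hvr).trans_le hv) (Nat.not_lt_zero _)
    | succ n ih =>
      intro v hv
      by_cases hvr : v = r
      · subst hvr; exact Reachable.refl v
      · exact ((hadjp v hvr).reachable).trans
          (ih (π v) (by have := hdec v hvr; omega))
  haveI : Nonempty V := ⟨r⟩
  constructor
  · exact ⟨fun u v => (hreach _ u le_rfl).trans (hreach _ v le_rfl).symm⟩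
  · rw [isAcyclic_iff_forall_adj_isBridge]
    intro a b hab
    rw [hG, fromEdgeSet_adj] at hab
    obtain ⟨⟨w, hw, he⟩, -⟩ := hab
    rw [he]
    rw [isBridge_iff]
    intro hre
    have key : ∀ x y, (G \ SimpleGraph.fromEdgeSet {s(w, π w)}).Adj x y →
        ((∃ k, π^[k] x = w) ↔ (∃ k, π^[k] y = w)) := by
      intro x y hxy
      rw [sdiff_adj] at hxy
      obtain ⟨hxy1, hxy2⟩ := hxy
      rw [hG, fromEdgeSet_adj] at hxy1
      obtain ⟨⟨u, hu, hedge⟩, hxyne⟩ := hxy1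
      have hedne : s(x, y) ≠ s(w, π w) := by
        intro hc
        exact hxy2 (by rw [fromEdgeSet_adj]; exact ⟨by rw [hc]; rfl, hxyne⟩)
      have huw : u ≠ w := by
        rintro rfl
        exact hedne (by rw [hedge])
      have main : (∃ k, π^[k] u = w) ↔ (∃ k, π^[k] (π u) = w) := by
        constructor
        · rintro ⟨k, hk⟩
          cases k with
          | zero => exact absurd hk huw
          | succ k => exact ⟨k, by rw [← Function.iterate_succ_apply]; exact hk⟩
        · rintro ⟨k, hk⟩
          exact ⟨k + 1, by rw [Function.iterate_succ_apply]; exact hk⟩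
      rw [Sym2.eq_iff] at hedge
      rcases hedge with ⟨rfl, rfl⟩ | ⟨rfl, rfl⟩
      · exact main
      · exact main.symm
    have := reachable_color key hre
    obtain ⟨k, hk⟩ := this.mp ⟨0, rfl⟩
    exact hnoret w hw k hk

lemma exists_litEdge_of_conn {m : ℕ} (T : Finset (Sym2 (SatVtx m)))
    (hsub : ↑T ⊆ satEdges m)
    (hconn : (SimpleGraph.fromEdgeSet (↑T : Set (Sym2 (SatVtx m)))).Connected)
    (i : Fin m) : ∃ j, litEdge (i, j) ∈ T := by
  by_contra hno
  push_neg at hno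
  set f : SatVtx m → Prop :=
    Sum.elim (fun k => k.val ≤ i.val) (fun p => p.1.val < i.val) with hf
  have key : ∀ a b, (SimpleGraph.fromEdgeSet (↑T : Set (Sym2 (SatVtx m)))).Adj a b →
      (f a ↔ f b) := by
    intro a b hab
    rw [fromEdgeSet_adj] at hab
    obtain ⟨hmem, -⟩ := hab
    obtain ⟨p, hp | hp⟩ := hsub hmem
    · have hpi : p.1 ≠ i := by
        rintro hp1
        have hmemT : litEdge p ∈ T := by rw [← hp]; exact hmem
        have hip : (i, p.2) = p := by rw [← hp1]
        exact hno p.2 (by rwa [hip])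
      have hvals : p.1.val ≠ i.val := fun hc => hpi (Fin.ext hc)
      rw [litEdge, Sym2.eq_iff] at hp
      rcases hp with ⟨rfl, rfl⟩ | ⟨rfl, rfl⟩ <;> simp [hf] <;> omega
    · rw [backEdge, Sym2.eq_iff] at hp
      rcases hp with ⟨rfl, rfl⟩ | ⟨rfl, rfl⟩ <;> simp [hf] <;> omega
  have hreach := hconn.preconnected (Sum.inl i.castSucc) (Sum.inl i.succ)
  have := reachable_color key hreach
  simp [hf] at this

lemma tree_card {m : ℕ} (T : Finset (Sym2 (SatVtx m))) (hsub : ↑T ⊆ satEdges m)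
    (htree : (SimpleGraph.fromEdgeSet (↑T : Set (Sym2 (SatVtx m)))).IsTree) :
    T.card = 4 * m := by
  have hnd : ∀ e ∈ (↑T : Set (Sym2 (SatVtx m))), ¬ e.IsDiag := by
    intro e he
    obtain ⟨p, hp | hp⟩ := hsub he <;> subst hp
    · exact litEdge_not_diag p
    · exact backEdge_not_diag p
  have hE : (SimpleGraph.fromEdgeSet (↑T : Set (Sym2 (SatVtx m)))).edgeSet = ↑T := by
    rw [SimpleGraph.edgeSet_fromEdgeSet]
    ext e
    simp only [Set.mem_diff, Set.mem_setOf_eq, and_iff_left_iff_imp]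
    exact fun he => hnd e he
  haveI hfin : Fintype (SimpleGraph.fromEdgeSet (↑T : Set (Sym2 (SatVtx m)))).edgeSet :=
    Set.Finite.fintype (by rw [hE]; exact T.finite_toSet)
  have hcard := htree.card_edgeFinset
  have hEF : (SimpleGraph.fromEdgeSet (↑T : Set (Sym2 (SatVtx m)))).edgeFinset = T := by
    apply Finset.coe_injective
    rw [SimpleGraph.coe_edgeFinset, hE]
  rw [hEF] at hcard
  have : Fintype.card (SatVtx m) = 4 * m + 1 := by
    simp [SatVtx]
    omega
  omega

lemma sum_scenCost {m : ℕ} (T : Finset (Sym2 (SatVtx m))) (p q : Fin m × Fin 3) :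
    ∑ e ∈ T, scenCost p q e
      = ((T.filter (fun e => e = litEdge p ∨ e = litEdge q)).card : ℝ) * (4 * m) - T.card := by
  classical
  have h : ∀ e, scenCost p q e
      = (if e = litEdge p ∨ e = litEdge q then (4 * (m : ℝ)) else 0) - 1 := by
    intro e; unfold scenCost; split <;> ring
  rw [Finset.sum_congr rfl fun e _ => h e, Finset.sum_sub_distrib, ← Finset.sum_filter]
  simp [mul_comm]

def parentFn {m : ℕ} (w : Fin m → Fin 3) : SatVtx m → SatVtx m
  | Sum.inr p => Sum.inl p.1.succ
  | Sum.inl k =>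
      if h : k = Fin.last m then Sum.inl k else Sum.inr (k.castPred h, w (k.castPred h))

def heightFn {m : ℕ} : SatVtx m → ℕ
  | Sum.inl k => 2 * (m - k.val)
  | Sum.inr p => 2 * (m - p.1.val) - 1

def satTreeEdges {m : ℕ} (w : Fin m → Fin 3) : Finset (Sym2 (SatVtx m)) :=
  Finset.univ.image backEdge ∪ Finset.univ.image (fun i : Fin m => litEdge (i, w i))

lemma satTreeEdges_sub {m : ℕ} (w : Fin m → Fin 3) :
    ↑(satTreeEdges w) ⊆ satEdges m := by
  intro e he
  simp only [satTreeEdges, Finset.coe_union, Set.mem_union, Finset.coe_image,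
    Set.mem_image, Finset.coe_univ, Set.image_univ, Set.mem_range] at he
  rcases he with ⟨p, rfl⟩ | ⟨i, rfl⟩
  · exact ⟨p, Or.inr rfl⟩
  · exact ⟨(i, w i), Or.inl rfl⟩

lemma mem_satTreeEdges_lit {m : ℕ} {w : Fin m → Fin 3} {p : Fin m × Fin 3}
    (h : litEdge p ∈ satTreeEdges w) : p = (p.1, w p.1) := by
  simp only [satTreeEdges, Finset.mem_union, Finset.mem_image, Finset.mem_univ,
    true_and] at h
  rcases h with ⟨q, hq⟩ | ⟨i, hi⟩
  · exact absurd hq.symm (litEdge_ne_backEdge p q)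
  · have := litEdge_inj hi.symm
    rw [this]

lemma satTreeEdges_coe {m : ℕ} (w : Fin m → Fin 3) :
    ↑(satTreeEdges w)
      = {e : Sym2 (SatVtx m) | ∃ v, v ≠ Sum.inl (Fin.last m) ∧ e = s(v, parentFn w v)} := by
  ext e
  simp only [satTreeEdges, Finset.coe_union, Set.mem_union, Finset.coe_image,
    Finset.coe_univ, Set.image_univ, Set.mem_range, Set.mem_setOf_eq]
  constructor
  · rintro (⟨p, rfl⟩ | ⟨i, rfl⟩)
    · exact ⟨Sum.inr p, Sum.inr_ne_inl, rfl⟩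
    · refine ⟨Sum.inl i.castSucc, ?_, ?_⟩
      · simp only [ne_eq, Sum.inl.injEq]
        exact (Fin.castSucc_lt_last i).ne
      · rw [litEdge, parentFn]
        rw [dif_neg (Fin.castSucc_lt_last i).ne]
        rw [Fin.castPred_castSucc]
  · rintro ⟨v, hv, rfl⟩
    match v with
    | Sum.inr p => exact Or.inl ⟨p, rfl⟩
    | Sum.inl k =>
      have hk : k ≠ Fin.last m := fun hc => hv (by rw [hc])
      refine Or.inr ⟨k.castPred hk, ?_⟩
      rw [litEdge, parentFn, dif_neg hk, Fin.castSucc_castPred]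

lemma satTreeEdges_isTree {m : ℕ} (w : Fin m → Fin 3) :
    (SimpleGraph.fromEdgeSet (↑(satTreeEdges w) : Set (Sym2 (SatVtx m)))).IsTree := by
  rw [satTreeEdges_coe w]
  apply isTree_parent (Sum.inl (Fin.last m)) (parentFn w) heightFn
  · rw [parentFn, dif_pos rfl]
  · intro v hv
    match v with
    | Sum.inl k =>
      have hk : k ≠ Fin.last m := fun hc => hv (by rw [hc])
      have hkv : k.val < m := Fin.val_lt_last hk
      rw [parentFn, dif_neg hk]
      show heightFn (Sum.inr _) < heightFn (Sum.inl k)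
      simp only [heightFn, Fin.coe_castPred]
      omega
    | Sum.inr p =>
      have hp : p.1.val < m := p.1.isLt
      rw [parentFn]
      show heightFn (Sum.inl p.1.succ) < heightFn (Sum.inr p)
      simp only [heightFn, Fin.val_succ]
      omega

/-- The 3-SAT reduction: for a 3-SAT instance with `m ≥ 1` clauses `cl` over
variables `Fin nv`, in which every variable occurs both positively and negatively,
consider the graph with edge set `satEdges m`, back edges of cost `-1` in all
scenarios, and one scenario for each contradictory pair of literal occurrences.
Then: (a) every spanning tree has maximum scenario cost at least `0`; (b) if the
instance is satisfiable, some spanning tree has scenario cost at most `0` in every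
scenario (hence, by (a), maximum scenario cost exactly `0`); (c) if the instance is
unsatisfiable, every spanning tree has maximum scenario cost at least `4m`. -/
theorem stmt_18 (nv m : ℕ) (hm : 0 < m) (hnv : 0 < nv)
    (cl : Fin m → Fin 3 → Fin nv × Bool)
    (hocc : ∀ x : Fin nv, (∃ i j, cl i j = (x, true)) ∧ (∃ i j, cl i j = (x, false))) :
    -- (a)
    (∀ T : Finset (Sym2 (SatVtx m)), ↑T ⊆ satEdges m →
      (SimpleGraph.fromEdgeSet (↑T : Set (Sym2 (SatVtx m)))).IsTree →
      ∃ p q, Contra cl p q ∧ 0 ≤ ∑ e ∈ T, scenCost p q e) ∧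
    -- (b)
    ((∃ A : Fin nv → Bool, ∀ i, ∃ j, A (cl i j).1 = (cl i j).2) →
      ∃ T : Finset (Sym2 (SatVtx m)), ↑T ⊆ satEdges m ∧
        (SimpleGraph.fromEdgeSet (↑T : Set (Sym2 (SatVtx m)))).IsTree ∧
        ∀ p q, Contra cl p q → ∑ e ∈ T, scenCost p q e ≤ 0) ∧
    -- (c)
    ((¬ ∃ A : Fin nv → Bool, ∀ i, ∃ j, A (cl i j).1 = (cl i j).2) →
      ∀ T : Finset (Sym2 (SatVtx m)), ↑T ⊆ satEdges m →
        (SimpleGraph.fromEdgeSet (↑T : Set (Sym2 (SatVtx m)))).IsTree →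
        ∃ p q, Contra cl p q ∧ (4 * m : ℝ) ≤ ∑ e ∈ T, scenCost p q e) := by
  classical
  have hm0 : (0:ℝ) ≤ 4 * m := by positivity
  have hcontra : ∀ p : Fin m × Fin 3, ∃ q, Contra cl p q := by
    intro p
    obtain ⟨⟨i, j, hij⟩, ⟨i', j', hij'⟩⟩ := hocc (cl p.1 p.2).1
    cases hb : (cl p.1 p.2).2
    · exact ⟨(i, j), by constructor <;> simp [hij, hb]⟩
    · exact ⟨(i', j'), by constructor <;> simp [hij', hb]⟩
  refine ⟨?_, ?_, ?_⟩
  · -- (a)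
    intro T hsub htree
    obtain ⟨j, hj⟩ := exists_litEdge_of_conn T hsub htree.1 ⟨0, hm⟩
    set p := ((⟨0, hm⟩ : Fin m), j) with hp
    obtain ⟨q, hq⟩ := hcontra p
    refine ⟨p, q, hq, ?_⟩
    rw [sum_scenCost, tree_card T hsub htree]
    have h1 : 1 ≤ (T.filter (fun e => e = litEdge p ∨ e = litEdge q)).card :=
      Finset.card_pos.mpr ⟨litEdge p, Finset.mem_filter.mpr ⟨hj, Or.inl rfl⟩⟩
    have h1' : (1:ℝ) ≤ ((T.filter (fun e => e = litEdge p ∨ e = litEdge q)).card : ℝ) := by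
      exact_mod_cast h1
    push_cast
    nlinarith [mul_le_mul_of_nonneg_right h1' hm0]
  · -- (b)
    rintro ⟨A, hA⟩
    choose w hw using hA
    refine ⟨satTreeEdges w, satTreeEdges_sub w, satTreeEdges_isTree w, ?_⟩
    intro p q hpq
    rw [sum_scenCost, tree_card _ (satTreeEdges_sub w) (satTreeEdges_isTree w)]
    have hboth : ¬ (litEdge p ∈ satTreeEdges w ∧ litEdge q ∈ satTreeEdges w) := by
      rintro ⟨h1, h2⟩
      have e1 : p.2 = w p.1 := congrArg Prod.snd (mem_satTreeEdges_lit h1)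
      have e2 : q.2 = w q.1 := congrArg Prod.snd (mem_satTreeEdges_lit h2)
      have a1 : A (cl p.1 p.2).1 = (cl p.1 p.2).2 := by rw [e1]; exact hw p.1
      have a2 : A (cl q.1 q.2).1 = (cl q.1 q.2).2 := by rw [e2]; exact hw q.1
      have : (cl q.1 q.2).2 = !(cl q.1 q.2).2 := by
        conv_lhs => rw [← a2, ← hpq.1, a1, hpq.2]
      simp at this
    have hcard : (Finset.filter (fun e => e = litEdge p ∨ e = litEdge q)
        (satTreeEdges w)).card ≤ 1 := by
      apply Finset.card_le_one.mpr
      intro a ha b hb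
      rw [Finset.mem_filter] at ha hb
      obtain ⟨haT, ha2⟩ := ha
      obtain ⟨hbT, hb2⟩ := hb
      rcases ha2 with rfl | rfl <;> rcases hb2 with rfl | rfl
      · rfl
      · exact absurd ⟨haT, hbT⟩ hboth
      · exact absurd ⟨hbT, haT⟩ hboth
      · rfl
    have hc' : ((Finset.filter (fun e => e = litEdge p ∨ e = litEdge q)
        (satTreeEdges w)).card : ℝ) ≤ 1 := by exact_mod_cast hcard
    push_cast
    nlinarith [mul_le_mul_of_nonneg_right hc' hm0]
  · -- (c)
    intro hunsat T hsub htree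
    by_cases hcp : ∃ p q, Contra cl p q ∧ litEdge p ∈ T ∧ litEdge q ∈ T
    · obtain ⟨p, q, hc, hpT, hqT⟩ := hcp
      refine ⟨p, q, hc, ?_⟩
      rw [sum_scenCost, tree_card T hsub htree]
      have hne : litEdge p ≠ litEdge q := by
        intro h
        have hpq := litEdge_inj h
        rw [hpq] at hc
        have := hc.2
        simp at this
      have hsubset : ({litEdge p, litEdge q} : Finset (Sym2 (SatVtx m)))
          ⊆ T.filter (fun e => e = litEdge p ∨ e = litEdge q) := by
        intro e he
        rw [Finset.mem_insert, Finset.mem_singleton] at he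
        rcases he with rfl | rfl
        · exact Finset.mem_filter.mpr ⟨hpT, Or.inl rfl⟩
        · exact Finset.mem_filter.mpr ⟨hqT, Or.inr rfl⟩
      have h2 : 2 ≤ (T.filter (fun e => e = litEdge p ∨ e = litEdge q)).card := by
        have hcc := Finset.card_le_card hsubset
        rwa [Finset.card_pair hne] at hcc
      have h2' : (2:ℝ) ≤ ((T.filter (fun e => e = litEdge p ∨ e = litEdge q)).card : ℝ) := by
        exact_mod_cast h2
      push_cast
      nlinarith [mul_le_mul_of_nonneg_right h2' hm0]
    · exfalso
      apply hunsat
      push_neg at hcp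
      refine ⟨fun x => decide (∃ p : Fin m × Fin 3, litEdge p ∈ T ∧ cl p.1 p.2 = (x, true)), ?_⟩
      intro i
      obtain ⟨j, hj⟩ := exists_litEdge_of_conn T hsub htree.1 i
      refine ⟨j, ?_⟩
      cases hb : (cl i j).2 with
      | true =>
        apply decide_eq_true
        exact ⟨(i, j), hj, by rw [← hb]⟩
      | false =>
        apply decide_eq_false
        rintro ⟨p, hpT, hpx⟩
        have hcontra' : Contra cl p (i, j) := by
          constructor
          · rw [hpx]
          · rw [hpx, hb]
            simp
        exact (hcp p (i, j) hcontra' hpT) hj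
end
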